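/- Let X be a nonnegative random variable on a probability space (Ω, 𝓕, P), let τ > 0, κ > τ, C ≥ 0 and u > 0, and suppose that P(X > t·u) ≤ C · t^{−κ} · P(X > u) for all real t ≥ 1. Then E[(X/u)^τ · 1{X > u}] ≤ (1 + C·τ/(κ−τ)) · P(X > u). -/

import Mathlib

open MeasureTheory
open scoped ENNReal

/-- Quantitative content of inequality (B.1) of the paper: a Potter-type tail bound
`P(X > t u) ≤ C t^{-κ} P(X > u)` for `t ≥ 1` implies
`E[(X/u)^τ 1{X > u}] ≤ (1 + C τ/(κ - τ)) P(X > u)` for `0 < τ < κ`. -/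
theorem stmt7 {Ω : Type*} [MeasurableSpace Ω] (P : Measure Ω) [IsProbabilityMeasure P]
    (X : Ω → ℝ) (hXnn : ∀ ω, 0 ≤ X ω) (hXm : Measurable X)
    (τ κ C u : ℝ) (hτ : 0 < τ) (hκ : τ < κ) (hC : 0 ≤ C) (hu : 0 < u)
    (hpotter : ∀ t : ℝ, 1 ≤ t →
      P {ω | t * u < X ω} ≤ ENNReal.ofReal (C * t ^ (-κ)) * P {ω | u < X ω}) :
    ∫⁻ ω, (if u < X ω then ENNReal.ofReal ((X ω / u) ^ τ) else 0) ∂P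
      ≤ ENNReal.ofReal (1 + C * τ / (κ - τ)) * P {ω | u < X ω} := by
  set A := P {ω | u < X ω} with hA
  set g : Ω → ℝ := fun ω => if u < X ω then (X ω / u) ^ τ else 0 with hg
  have hgnn : ∀ ω, 0 ≤ g ω := by
    intro ω
    simp only [hg]
    split
    · exact Real.rpow_nonneg (div_nonneg (hXnn ω) hu.le) τ
    · exact le_refl 0
  have hgm : Measurable g := by
    exact Measurable.ite (measurableSet_lt measurable_const hXm)
      (Measurable.pow (hXm.div_const u) measurable_const) measurable_const
  have step1 : (∫⁻ ω, (if u < X ω then ENNReal.ofReal ((X ω / u) ^ τ) else 0) ∂P)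
      = ∫⁻ ω, ENNReal.ofReal (g ω) ∂P := by
    refine lintegral_congr fun ω => ?_
    simp only [hg]
    split <;> simp
  rw [step1, lintegral_eq_lintegral_meas_lt P (Filter.Eventually.of_forall hgnn)
    hgm.aemeasurable]
  have hsplit : Set.Ioi (0:ℝ) = Set.Ioc 0 1 ∪ Set.Ioi 1 :=
    (Set.Ioc_union_Ioi_eq_Ioi zero_le_one).symm
  rw [hsplit, lintegral_union measurableSet_Ioi (Set.Ioc_disjoint_Ioi le_rfl)]
  have hb1 : ∫⁻ t in Set.Ioc (0:ℝ) 1, P {ω | t < g ω} ≤ A := by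
    calc ∫⁻ t in Set.Ioc (0:ℝ) 1, P {ω | t < g ω}
        ≤ ∫⁻ _ in Set.Ioc (0:ℝ) 1, A := by
          refine setLIntegral_mono' measurableSet_Ioc fun t ht => ?_
          refine measure_mono fun ω hω => ?_
          simp only [Set.mem_setOf_eq] at hω ⊢
          by_contra h
          rw [hg] at hω
          simp only [if_neg h] at hω
          exact absurd (ht.1.trans hω) (lt_irrefl 0)
      _ = A := by
          rw [setLIntegral_const, Real.volume_Ioc]
          simp
  have hτne : τ ≠ 0 := hτ.ne'
  have hκτ : (1:ℝ) < κ / τ := (one_lt_div hτ).2 hκ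
  have ha : -(κ / τ) < -1 := by linarith
  have hb2 : ∫⁻ t in Set.Ioi (1:ℝ), P {ω | t < g ω}
      ≤ ENNReal.ofReal (C * τ / (κ - τ)) * A := by
    have key : ∀ t ∈ Set.Ioi (1:ℝ),
        P {ω | t < g ω} ≤ ENNReal.ofReal (C * t ^ (-(κ / τ))) * A := by
      intro t ht
      have ht1 : (1:ℝ) < t := ht
      have ht0 : (0:ℝ) < t := lt_trans zero_lt_one ht1
      have hs1 : (1:ℝ) ≤ t ^ τ⁻¹ := Real.one_le_rpow ht1.le (by positivity)
      have hsub : {ω | t < g ω} ⊆ {ω | t ^ τ⁻¹ * u < X ω} := by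
        intro ω hω
        simp only [Set.mem_setOf_eq, hg] at hω ⊢
        by_cases h : u < X ω
        · rw [if_pos h] at hω
          have hb : 0 ≤ X ω / u := div_nonneg (hXnn ω) hu.le
          have hlt : t ^ τ⁻¹ < X ω / u := by
            have h2 := Real.rpow_lt_rpow ht0.le hω (by positivity : (0:ℝ) < τ⁻¹)
            rwa [Real.rpow_rpow_inv hb hτne] at h2
          calc t ^ τ⁻¹ * u < (X ω / u) * u := by
                exact mul_lt_mul_of_pos_right hlt hu
            _ = X ω := div_mul_cancel₀ _ hu.ne'
        · rw [if_neg h] at hω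
          linarith
      have hpow : (t ^ τ⁻¹ : ℝ) ^ (-κ) = t ^ (-(κ / τ)) := by
        rw [← Real.rpow_mul ht0.le]
        congr 1
        field_simp
      calc P {ω | t < g ω} ≤ P {ω | t ^ τ⁻¹ * u < X ω} := measure_mono hsub
        _ ≤ ENNReal.ofReal (C * (t ^ τ⁻¹) ^ (-κ)) * A := hpotter _ hs1
        _ = ENNReal.ofReal (C * t ^ (-(κ / τ))) * A := by rw [hpow]
    calc ∫⁻ t in Set.Ioi (1:ℝ), P {ω | t < g ω}
        ≤ ∫⁻ t in Set.Ioi (1:ℝ), ENNReal.ofReal (C * t ^ (-(κ / τ))) * A :=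
          setLIntegral_mono' measurableSet_Ioi key
      _ = (∫⁻ t in Set.Ioi (1:ℝ), ENNReal.ofReal (C * t ^ (-(κ / τ)))) * A :=
          lintegral_mul_const'' _ ((measurable_const.mul
            (Measurable.pow measurable_id measurable_const)).ennreal_ofReal.aemeasurable)
      _ = ENNReal.ofReal (C * τ / (κ - τ)) * A := by
          congr 1
          have hint : IntegrableOn (fun t : ℝ => C * t ^ (-(κ / τ))) (Set.Ioi 1) :=
            (integrableOn_Ioi_rpow_of_lt ha one_pos).const_mul C
          rw [← ofReal_integral_eq_lintegral_ofReal hint]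
          · rw [integral_const_mul, integral_Ioi_rpow_of_lt ha one_pos]
            congr 1
            rw [Real.one_rpow]
            field_simp
            rw [show (-κ + τ) = -(κ - τ) by ring, div_neg, neg_neg]
          · filter_upwards [self_mem_ae_restrict measurableSet_Ioi] with t ht
            have : (0:ℝ) < t := lt_trans zero_lt_one ht
            positivity
  have hfin : C * τ / (κ - τ) ≥ 0 := by
    apply div_nonneg (mul_nonneg hC hτ.le)
    linarith
  calc (∫⁻ t in Set.Ioc (0:ℝ) 1, P {ω | t < g ω})
        + ∫⁻ t in Set.Ioi (1:ℝ), P {ω | t < g ω}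
      ≤ A + ENNReal.ofReal (C * τ / (κ - τ)) * A := add_le_add hb1 hb2
    _ = ENNReal.ofReal (1 + C * τ / (κ - τ)) * A := by
        rw [ENNReal.ofReal_add zero_le_one hfin, add_mul, ENNReal.ofReal_one, one_mul]
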